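/- Let C be a coalgebra over a field k, g ∈ C a group-like element, and Λ ∈ C. Let V_Λ = {(ν ⊗ id)(Δ(Λ)) : ν ∈ C'} be the smallest left coideal containing Λ and ΛV = {(id ⊗ ν)(Δ(Λ)) : ν ∈ C'} the smallest right coideal containing Λ. Then the space of g-cointegrals L^g = {φ ∈ V_Λ' : (id ⊗ φ)(Δ(a)) = φ(a)g for all a ∈ V_Λ} is one-dimensional if g ∈ ΛV, and zero otherwise. Moreover, a g-cointegral φ is nonzero if and only if φ(Λ) ≠ 0. -/

import Mathlib

open scoped TensorProduct

section Aux
variable {k C M N : Type*} [Field k] [AddCommGroup C] [Module k C]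
  [AddCommGroup M] [Module k M] [AddCommGroup N] [Module k N]

/-- If all first-leg functionals kill `z`, then `z = 0`. -/
lemma gcoint_sep (z : C ⊗[k] M)
    (h : ∀ ν : Module.Dual k C, TensorProduct.map ν LinearMap.id z = 0) : z = 0 := by
  classical
  let b := Module.Basis.ofVectorSpace k C
  let e : C ⊗[k] M ≃ₗ[k] (Module.Basis.ofVectorSpaceIndex k C →₀ M) :=
    (TensorProduct.congr b.repr (LinearEquiv.refl k M)).trans
      (TensorProduct.finsuppScalarLeft k M _)
  suffices he : e z = 0 by
    simpa using congrArg e.symm he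
  ext i
  have key : (Finsupp.lapply i ∘ₗ e.toLinearMap : C ⊗[k] M →ₗ[k] M)
      = (TensorProduct.lid k M).toLinearMap ∘ₗ
        TensorProduct.map (b.coord i) LinearMap.id := by
    apply TensorProduct.ext'
    intro x m
    simp [e, Module.Basis.coord]
  have := congrArg (TensorProduct.lid k M) (h (b.coord i))
  have h2 : ((TensorProduct.lid k M).toLinearMap ∘ₗ
      TensorProduct.map (b.coord i) LinearMap.id) z = 0 := by simpa using this
  rw [← key] at h2
  simpa using h2

lemma gcoint_swap (ν : Module.Dual k C) (φ : Module.Dual k M) (t : C ⊗[k] M) :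
    ν ((TensorProduct.rid k C) (TensorProduct.map LinearMap.id φ t)) =
    φ ((TensorProduct.lid k M) (TensorProduct.map ν LinearMap.id t)) := by
  induction t using TensorProduct.induction_on with
  | zero => simp
  | tmul x m => simp [mul_comm]
  | add x y hx hy => simp [map_add, hx, hy]

lemma gcoint_natL (f : M →ₗ[k] N) (ν : Module.Dual k C) (t : C ⊗[k] M) :
    f ((TensorProduct.lid k M) (TensorProduct.map ν LinearMap.id t)) =
    (TensorProduct.lid k N) (TensorProduct.map ν LinearMap.id
      (TensorProduct.map LinearMap.id f t)) := by
  induction t using TensorProduct.induction_on with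
  | zero => simp
  | tmul x m => simp
  | add x y hx hy => simp [map_add, hx, hy]

lemma gcoint_natR (L : C →ₗ[k] C) (φ : Module.Dual k M) (t : C ⊗[k] M) :
    (TensorProduct.rid k C) (TensorProduct.map LinearMap.id φ
      (TensorProduct.map L LinearMap.id t)) =
    L ((TensorProduct.rid k C) (TensorProduct.map LinearMap.id φ t)) := by
  induction t using TensorProduct.induction_on with
  | zero => simp
  | tmul x m => simp
  | add x y hx hy => simp [map_add, hx, hy]

lemma gcoint_comm (L : C →ₗ[k] C) (f : M →ₗ[k] N) (t : C ⊗[k] M) :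
    TensorProduct.map LinearMap.id f (TensorProduct.map L LinearMap.id t) =
    TensorProduct.map L LinearMap.id (TensorProduct.map LinearMap.id f t) := by
  induction t using TensorProduct.induction_on with
  | zero => simp
  | tmul x m => simp
  | add x y hx hy => simp [map_add, hx, hy]

lemma gcoint_factor (f : M →ₗ[k] N) (ψ : Module.Dual k N) (t : C ⊗[k] M) :
    TensorProduct.map LinearMap.id (ψ ∘ₗ f) t =
    TensorProduct.map LinearMap.id ψ (TensorProduct.map LinearMap.id f t) := by
  induction t using TensorProduct.induction_on with
  | zero => simp
  | tmul x m => simp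
  | add x y hx hy => simp [map_add, hx, hy]

end Aux

section Coassoc
variable {k C : Type*} [Field k] [AddCommGroup C] [Module k C] [Coalgebra k C]

/-- Comultiplication of a generator of the left coideal. -/
lemma gcoint_comul_gen (ν : Module.Dual k C) (Λ : C) :
    Coalgebra.comul (R := k)
      ((TensorProduct.lid k C) (TensorProduct.map ν LinearMap.id
        (Coalgebra.comul (R := k) Λ))) =
    TensorProduct.map ((TensorProduct.lid k C).toLinearMap ∘ₗ
        TensorProduct.map ν LinearMap.id ∘ₗ Coalgebra.comul (R := k))
      LinearMap.id (Coalgebra.comul (R := k) Λ) := by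
  have hA : ((TensorProduct.lid k (C ⊗[k] C)).toLinearMap ∘ₗ
        TensorProduct.map ν LinearMap.id ∘ₗ
        (TensorProduct.assoc k C C C).toLinearMap :
        (C ⊗[k] C) ⊗[k] C →ₗ[k] C ⊗[k] C) =
      TensorProduct.map ((TensorProduct.lid k C).toLinearMap ∘ₗ
        TensorProduct.map ν LinearMap.id) LinearMap.id := by
    ext x y z
    simp [TensorProduct.smul_tmul']
  have hB : ((TensorProduct.lid k (C ⊗[k] C)).toLinearMap ∘ₗ
        TensorProduct.map ν LinearMap.id ∘ₗ
        (Coalgebra.comul (R := k)).lTensor C : C ⊗[k] C →ₗ[k] C ⊗[k] C) =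
      Coalgebra.comul (R := k) ∘ₗ (TensorProduct.lid k C).toLinearMap ∘ₗ
        TensorProduct.map ν LinearMap.id := by
    ext x y
    simp
  have hco := Coalgebra.coassoc_apply (R := k) Λ
  have hB' := LinearMap.congr_fun hB (Coalgebra.comul (R := k) Λ)
  simp only [LinearMap.coe_comp, Function.comp_apply, LinearEquiv.coe_coe] at hB'
  rw [← hB', ← hco]
  have hA' := LinearMap.congr_fun hA ((Coalgebra.comul (R := k)).rTensor C
    (Coalgebra.comul (R := k) Λ))
  simp only [LinearMap.coe_comp, Function.comp_apply, LinearEquiv.coe_coe] at hA'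
  rw [hA']
  rw [← LinearMap.comp_apply, LinearMap.map_comp_rTensor, LinearMap.comp_assoc]

end Coassoc

/-- Let `C` be a coalgebra, `g` a group-like element and `Λ ∈ C`, with `VΛ` the
smallest left coideal containing `Λ` and `PV` the smallest right coideal
containing `Λ`.  The space of `g`-cointegrals on `VΛ` is one-dimensional if
`g ∈ PV` and zero otherwise; moreover a `g`-cointegral `φ` is nonzero iff
`φ(Λ) ≠ 0`. -/
theorem gCointegral_dim
    (k C : Type*) [Field k] [AddCommGroup C] [Module k C] [Coalgebra k C]
    (g Λ : C) (hg0 : g ≠ 0) (hg : Coalgebra.comul (R := k) g = g ⊗ₜ[k] g)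
    (VΛ PV : Submodule k C)
    (hV : VΛ = Submodule.span k {x : C | ∃ ν : Module.Dual k C,
      x = (TensorProduct.lid k C)
        ((TensorProduct.map ν LinearMap.id) (Coalgebra.comul (R := k) Λ))})
    (hPV : PV = Submodule.span k {x : C | ∃ ν : Module.Dual k C,
      x = (TensorProduct.rid k C)
        ((TensorProduct.map LinearMap.id ν) (Coalgebra.comul (R := k) Λ))})
    (Coint : Set (Module.Dual k ↥VΛ))
    (hCoint : Coint = {φ : Module.Dual k ↥VΛ |
      ∀ (a : ↥VΛ) (t : C ⊗[k] ↥VΛ),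
        (TensorProduct.map LinearMap.id VΛ.subtype) t = Coalgebra.comul (R := k) (a : C) →
        (TensorProduct.rid k C) ((TensorProduct.map LinearMap.id φ) t) = φ a • g}) :
    (g ∈ PV → ∃ φ ∈ Coint, φ ≠ 0 ∧ ∀ ψ ∈ Coint, ∃ c : k, ψ = c • φ) ∧
    (g ∉ PV → ∀ φ ∈ Coint, φ = 0) ∧
    (∀ φ ∈ Coint, ∀ Λ' : ↥VΛ, (Λ' : C) = Λ → (φ ≠ 0 ↔ φ Λ' ≠ 0)) := by
  classical
  set Z : C ⊗[k] C := Coalgebra.comul (R := k) Λ with hZdef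
  -- generators are in VΛ
  have hgen : ∀ ν : Module.Dual k C,
      (TensorProduct.lid k C) ((TensorProduct.map ν LinearMap.id) Z) ∈ VΛ := by
    intro ν; rw [hV]; exact Submodule.subset_span ⟨ν, rfl⟩
  -- injectivity of id ⊗ subtype
  have hinj : Function.Injective
      (TensorProduct.map (LinearMap.id : C →ₗ[k] C) VΛ.subtype) :=
    Module.Flat.lTensor_preserves_injective_linearMap (M := C)
      VΛ.subtype (Submodule.injective_subtype VΛ)
  -- `comul Λ` lifts to `C ⊗ VΛ`
  have hker : TensorProduct.map (LinearMap.id : C →ₗ[k] C) VΛ.mkQ Z = 0 := by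
    apply gcoint_sep
    intro ν
    apply (TensorProduct.lid k (C ⧸ VΛ)).injective
    rw [← gcoint_natL VΛ.mkQ ν Z, map_zero]
    simpa [Submodule.Quotient.mk_eq_zero] using hgen ν
  obtain ⟨T₀, hT₀⟩ : ∃ T₀ : C ⊗[k] ↥VΛ,
      TensorProduct.map (LinearMap.id : C →ₗ[k] C) VΛ.subtype T₀ = Z := by
    have hex := lTensor_exact (Q := C) (LinearMap.exact_subtype_mkQ VΛ)
      VΛ.mkQ_surjective
    exact (hex Z).mp hker
  -- the subtype-valued generators
  set xt : Module.Dual k C → ↥VΛ := fun ν =>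
    (TensorProduct.lid k ↥VΛ) ((TensorProduct.map ν LinearMap.id) T₀) with hxtdef
  have hxt : ∀ ν : Module.Dual k C, ((xt ν : ↥VΛ) : C)
      = (TensorProduct.lid k C) ((TensorProduct.map ν LinearMap.id) Z) := by
    intro ν
    have h := gcoint_natL (k := k) VΛ.subtype ν T₀
    rw [hT₀] at h
    simpa [hxtdef] using h
  -- counit facts
  have hcounit : ∀ a : C, (TensorProduct.lid k C)
      ((TensorProduct.map (Coalgebra.counit (R := k) (A := C)) LinearMap.id)
        (Coalgebra.comul (R := k) a)) = a := by
    intro a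
    have h := Coalgebra.rTensor_counit_comul (R := k) a
    rw [show (TensorProduct.map (Coalgebra.counit (R := k) (A := C))
        (LinearMap.id : C →ₗ[k] C))
        = (Coalgebra.counit (R := k) (A := C)).rTensor C from rfl, h]
    simp
  have hxtc : ((xt (Coalgebra.counit (R := k) (A := C)) : ↥VΛ) : C) = Λ :=
    (hxt _).trans (hcounit Λ)
  -- swapping legs over T₀
  have hswapT : ∀ (φ : Module.Dual k ↥VΛ) (ν : Module.Dual k C),
      ν ((TensorProduct.rid k C) ((TensorProduct.map LinearMap.id φ) T₀)) = φ (xt ν) :=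
    fun φ ν => gcoint_swap ν φ T₀
  -- any cointegral satisfies U φ = φ(Λ) • g
  have hUci : ∀ φ ∈ Coint, (TensorProduct.rid k C)
      ((TensorProduct.map LinearMap.id φ) T₀)
        = φ (xt (Coalgebra.counit (R := k) (A := C))) • g := by
    intro φ hφ
    rw [hCoint] at hφ
    exact hφ (xt (Coalgebra.counit (R := k) (A := C))) T₀ (by rw [hT₀, hxtc])
  -- functionals agreeing on the generators are equal
  have hext : ∀ φ ψ : Module.Dual k ↥VΛ, (∀ ν, φ (xt ν) = ψ (xt ν)) → φ = ψ := by
    intro φ ψ h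
    ext v
    obtain ⟨x, hx⟩ := v
    have hx' : x ∈ Submodule.span k {x : C | ∃ ν : Module.Dual k C,
        x = (TensorProduct.lid k C)
          ((TensorProduct.map ν LinearMap.id) (Coalgebra.comul (R := k) Λ))} := by
      rw [← hV]; exact hx
    refine Submodule.span_induction
      (p := fun y _ => ∀ hy : y ∈ VΛ, φ ⟨y, hy⟩ = ψ ⟨y, hy⟩) ?_ ?_ ?_ ?_ hx' hx
    · rintro y ⟨ν, rfl⟩ hy
      have hyx : (⟨_, hy⟩ : ↥VΛ) = xt ν := Subtype.ext (hxt ν).symm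
      rw [hyx]; exact h ν
    · intro hy
      have h0 : (⟨(0 : C), hy⟩ : ↥VΛ) = 0 := rfl
      rw [h0]; simp
    · intro p q hp hq ihp ihq hy
      have hpV : p ∈ VΛ := by rw [hV]; exact hp
      have hqV : q ∈ VΛ := by rw [hV]; exact hq
      have hsum : (⟨p + q, hy⟩ : ↥VΛ) = ⟨p, hpV⟩ + ⟨q, hqV⟩ := rfl
      rw [hsum, map_add, map_add, ihp hpV, ihq hqV]
    · intro c p hp ihp hy
      have hpV : p ∈ VΛ := by rw [hV]; exact hp
      have hsm : (⟨c • p, hy⟩ : ↥VΛ) = c • (⟨p, hpV⟩ : ↥VΛ) := rfl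
      rw [hsm, map_smul, map_smul, ihp hpV]
  -- a functional with U φ = 0 is zero
  have hzero : ∀ φ : Module.Dual k ↥VΛ,
      (TensorProduct.rid k C) ((TensorProduct.map LinearMap.id φ) T₀) = 0 → φ = 0 := by
    intro φ h0
    refine hext φ 0 fun ν => ?_
    have h := hswapT φ ν
    rw [h0] at h
    simpa using h.symm
  -- counit of g is 1
  have hεg : Coalgebra.counit (R := k) (A := C) g = 1 := by
    have h1 := hcounit g
    rw [hg] at h1
    simp only [TensorProduct.map_tmul, LinearMap.id_coe, id_eq,
      TensorProduct.lid_tmul] at h1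
    have h2 : (Coalgebra.counit (R := k) (A := C) g - 1) • g = 0 := by
      rw [sub_smul, one_smul, h1, sub_self]
    rcases smul_eq_zero.mp h2 with h | h
    · exact sub_eq_zero.mp h
    · exact absurd h hg0
  -- sufficiency: U φ = φ(Λ) • g implies φ is a cointegral
  have hsuff : ∀ φ : Module.Dual k ↥VΛ,
      (TensorProduct.rid k C) ((TensorProduct.map LinearMap.id φ) T₀)
        = φ (xt (Coalgebra.counit (R := k) (A := C))) • g →
      φ ∈ Coint := by
    intro φ hU
    rw [hCoint]
    intro a t ht
    have good : ∀ (x : C) (hx : x ∈ VΛ), ∃ t' : C ⊗[k] ↥VΛ,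
        TensorProduct.map LinearMap.id VΛ.subtype t' = Coalgebra.comul (R := k) x ∧
        (TensorProduct.rid k C) ((TensorProduct.map LinearMap.id φ) t')
          = φ ⟨x, hx⟩ • g := by
      intro x hx
      have hx' : x ∈ Submodule.span k {x : C | ∃ ν : Module.Dual k C,
          x = (TensorProduct.lid k C)
            ((TensorProduct.map ν LinearMap.id) (Coalgebra.comul (R := k) Λ))} := by
        rw [← hV]; exact hx
      refine Submodule.span_induction
        (p := fun y _ => ∀ hy : y ∈ VΛ, ∃ t' : C ⊗[k] ↥VΛ,
          TensorProduct.map LinearMap.id VΛ.subtype t' = Coalgebra.comul (R := k) y ∧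
          (TensorProduct.rid k C) ((TensorProduct.map LinearMap.id φ) t')
            = φ ⟨y, hy⟩ • g) ?_ ?_ ?_ ?_ hx' hx
      · rintro y ⟨ν, rfl⟩ hy
        set Lν : C →ₗ[k] C := (TensorProduct.lid k C).toLinearMap ∘ₗ
          TensorProduct.map ν LinearMap.id ∘ₗ Coalgebra.comul (R := k) with hLν
        refine ⟨TensorProduct.map Lν LinearMap.id T₀, ?_, ?_⟩
        · rw [gcoint_comm Lν VΛ.subtype T₀, hT₀]
          exact (gcoint_comul_gen ν Λ).symm
        · rw [gcoint_natR Lν φ T₀, hU, map_smul]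
          have hLg : Lν g = ν g • g := by
            rw [hLν]
            simp [hg]
          have hy' : (⟨_, hy⟩ : ↥VΛ) = xt ν := Subtype.ext (hxt ν).symm
          rw [hLg, hy', ← hswapT φ ν, hU, map_smul, smul_smul, smul_eq_mul]
      · intro hy
        have h0 : (⟨(0 : C), hy⟩ : ↥VΛ) = 0 := rfl
        exact ⟨0, by simp, by rw [h0]; simp⟩
      · intro p q hp hq ihp ihq hy
        have hpV : p ∈ VΛ := by rw [hV]; exact hp
        have hqV : q ∈ VΛ := by rw [hV]; exact hq
        obtain ⟨t1, h11, h12⟩ := ihp hpV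
        obtain ⟨t2, h21, h22⟩ := ihq hqV
        have hsum : (⟨p + q, hy⟩ : ↥VΛ) = ⟨p, hpV⟩ + ⟨q, hqV⟩ := rfl
        exact ⟨t1 + t2, by rw [map_add, h11, h21, map_add],
          by rw [map_add, map_add, h12, h22, hsum, map_add, add_smul]⟩
      · intro c p hp ihp hy
        have hpV : p ∈ VΛ := by rw [hV]; exact hp
        obtain ⟨t1, h11, h12⟩ := ihp hpV
        have hsm : (⟨c • p, hy⟩ : ↥VΛ) = c • (⟨p, hpV⟩ : ↥VΛ) := rfl
        exact ⟨c • t1, by rw [map_smul, h11, map_smul],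
          by rw [map_smul, map_smul, h12, hsm, map_smul, smul_assoc, smul_smul]⟩
    obtain ⟨t', h1, h2⟩ := good (a : C) a.2
    have htt : t = t' := hinj (by rw [ht, h1])
    rw [htt, h2]
  -- U φ always lies in PV
  have hUPV : ∀ φ : Module.Dual k ↥VΛ,
      (TensorProduct.rid k C) ((TensorProduct.map LinearMap.id φ) T₀) ∈ PV := by
    intro φ
    obtain ⟨φ', hφ'⟩ := LinearMap.exists_extend φ
    have e1 : TensorProduct.map (LinearMap.id : C →ₗ[k] C) φ T₀
        = TensorProduct.map LinearMap.id φ' Z := by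
      rw [← hφ', gcoint_factor VΛ.subtype φ' T₀, hT₀]
    rw [e1, hPV]
    exact Submodule.subset_span ⟨φ', rfl⟩
  refine ⟨?_, ?_, ?_⟩
  · -- g ∈ PV : existence and uniqueness
    intro hgPV
    set W : Module.Dual k C →ₗ[k] C :=
      { toFun := fun ν => (TensorProduct.rid k C)
          ((TensorProduct.map LinearMap.id ν) Z),
        map_add' := by
          intro ν1 ν2
          rw [TensorProduct.map_add_right]
          simp,
        map_smul' := by
          intro c ν
          rw [TensorProduct.map_smul_right]
          simp } with hWdef
    have hgrange : g ∈ LinearMap.range W := by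
      have hseteq : {x : C | ∃ ν : Module.Dual k C,
          x = (TensorProduct.rid k C)
            ((TensorProduct.map LinearMap.id ν) (Coalgebra.comul (R := k) Λ))}
          = Set.range W := by
        ext y
        constructor
        · rintro ⟨ν, rfl⟩; exact ⟨ν, rfl⟩
        · rintro ⟨ν, rfl⟩; exact ⟨ν, rfl⟩
      have : PV = LinearMap.range W := by
        rw [hPV, hseteq, ← LinearMap.coe_range, Submodule.span_eq]
      rw [← this]
      exact hgPV
    obtain ⟨ν₀, hν₀⟩ := hgrange
    set φ₀ : Module.Dual k ↥VΛ := ν₀ ∘ₗ VΛ.subtype with hφ₀def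
    have hUφ₀ : (TensorProduct.rid k C)
        ((TensorProduct.map LinearMap.id φ₀) T₀) = g := by
      have e1 : TensorProduct.map (LinearMap.id : C →ₗ[k] C) φ₀ T₀
          = TensorProduct.map LinearMap.id ν₀ Z := by
        rw [hφ₀def, gcoint_factor VΛ.subtype ν₀ T₀, hT₀]
      rw [e1]
      exact hν₀
    have hφ₀c : φ₀ (xt (Coalgebra.counit (R := k) (A := C))) = 1 := by
      have h := hswapT φ₀ (Coalgebra.counit (R := k) (A := C))
      rw [hUφ₀] at h
      rw [← h, hεg]
    have hφ₀Coint : φ₀ ∈ Coint := hsuff φ₀ (by rw [hUφ₀, hφ₀c, one_smul])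
    refine ⟨φ₀, hφ₀Coint, ?_, ?_⟩
    · intro h0
      rw [h0] at hφ₀c
      simp at hφ₀c
    · intro ψ hψ
      refine ⟨ψ (xt (Coalgebra.counit (R := k) (A := C))), ?_⟩
      refine hext _ _ fun ν => ?_
      have h1 := hswapT ψ ν
      rw [hUci ψ hψ] at h1
      have h2 := hswapT φ₀ ν
      rw [hUφ₀] at h2
      rw [← h1, map_smul, LinearMap.smul_apply, ← h2]
  · -- g ∉ PV : only the zero cointegral
    intro hgn φ hφ
    have hU := hUci φ hφ
    have hmem := hUPV φ
    rw [hU] at hmem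
    have hc0 : φ (xt (Coalgebra.counit (R := k) (A := C))) = 0 := by
      by_contra hc
      refine hgn ?_
      have := PV.smul_mem (φ (xt (Coalgebra.counit (R := k) (A := C))))⁻¹ hmem
      rwa [smul_smul, inv_mul_cancel₀ hc, one_smul] at this
    exact hzero φ (by rw [hU, hc0, zero_smul])
  · -- nonzero iff nonzero on Λ
    intro φ hφ Λ' hΛ'
    have hΛ'' : Λ' = xt (Coalgebra.counit (R := k) (A := C)) :=
      Subtype.ext (by rw [hΛ', hxtc])
    constructor
    · intro hφ0
      intro hval
      exact hφ0 (hzero φ (by rw [hUci φ hφ, ← hΛ'', hval, zero_smul]))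
    · intro hval h0
      rw [h0] at hval
      simp at hval
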